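/- arXiv:1611.08478 — 2 statements merged into one kernel-verified Lean document; each statement's English description precedes it below -/
import Mathlib

section
/- Conversely, if a smooth vector field v: ℝ³ → ℝ³ satisfies x₂ ∂₁v - x₁ ∂₂v + ∂₃v = (v₂, -v₁, 0) everywhere, then v is helical: v(S_θ(x)) = R_θ v(x) for all θ ∈ ℝ and x ∈ ℝ³. -/
open Real

/-- The helical transformation `S_θ`. -/
noncomputable def helS (θ : ℝ) (x : Fin 3 → ℝ) : Fin 3 → ℝ :=
  ![x 0 * Real.cos θ + x 1 * Real.sin θ, -(x 0) * Real.sin θ + x 1 * Real.cos θ, x 2 + θ]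

/-- Rotation by angle `θ` about the `x₃`-axis, acting on vectors. -/
noncomputable def helR (θ : ℝ) (v : Fin 3 → ℝ) : Fin 3 → ℝ :=
  ![v 0 * Real.cos θ + v 1 * Real.sin θ, -(v 0) * Real.sin θ + v 1 * Real.cos θ, v 2]

/-- If a smooth vector field `v` satisfies `x₂ ∂₁ v - x₁ ∂₂ v + ∂₃ v = (v₂, -v₁, 0)`
everywhere, then `v` is helical. -/
theorem xi_derivative_implies_helical
    (v : (Fin 3 → ℝ) → (Fin 3 → ℝ)) (hv : ContDiff ℝ 1 v)
    (hxi : ∀ x : Fin 3 → ℝ,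
      x 1 • fderiv ℝ v x (Pi.single 0 1) - x 0 • fderiv ℝ v x (Pi.single 1 1)
        + fderiv ℝ v x (Pi.single 2 1) = ![v x 1, -(v x 0), 0]) :
    ∀ (θ : ℝ) (x : Fin 3 → ℝ), v (helS θ x) = helR θ (v x) := by
  intro θ x
  -- derivative of the curve θ ↦ helS θ x
  have hγ : ∀ t : ℝ, HasDerivAt (fun s => helS s x)
      (![helS t x 1, -(helS t x 0), 1]) t := by
    intro t
    rw [hasDerivAt_pi]
    intro i
    fin_cases i
    · simpa [helS, mul_comm, Pi.add_def] using
        (((hasDerivAt_cos t).const_mul (x 0)).add ((hasDerivAt_sin t).const_mul (x 1)))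
    · have h := ((hasDerivAt_sin t).const_mul (-(x 0))).add ((hasDerivAt_cos t).const_mul (x 1))
      convert h using 1
      · rfl
      simp [helS]
      ring
    · simpa [helS] using (hasDerivAt_id t).const_add (x 2)
  -- rewrite the direction vector as a combination of basis vectors
  have hvec : ∀ y : Fin 3 → ℝ, (![y 1, -(y 0), 1] : Fin 3 → ℝ)
      = y 1 • (Pi.single 0 1 : Fin 3 → ℝ) - y 0 • (Pi.single 1 1 : Fin 3 → ℝ)
        + (Pi.single 2 1 : Fin 3 → ℝ) := by
    intro y
    funext i
    fin_cases i <;> simp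
  -- derivative of each component of v ∘ γ
  have key : ∀ (t : ℝ) (i : Fin 3), HasDerivAt (fun s => v (helS s x) i)
      ((![v (helS t x) 1, -(v (helS t x) 0), 0] : Fin 3 → ℝ) i) t := by
    intro t i
    have hd : HasDerivAt (fun s => v (helS s x))
        (fderiv ℝ v (helS t x) (![helS t x 1, -(helS t x 0), 1])) t :=
      (hv.differentiable one_ne_zero (helS t x)).hasFDerivAt.comp_hasDerivAt t (hγ t)
    have : fderiv ℝ v (helS t x) (![helS t x 1, -(helS t x 0), 1])
        = ![v (helS t x) 1, -(v (helS t x) 0), 0] := by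
      rw [hvec]
      simp only [map_add, map_sub, map_smul]
      exact hxi (helS t x)
    rw [this] at hd
    exact (hasDerivAt_pi.1 hd) i
  set A : ℝ → ℝ := fun s => v (helS s x) 0 with hAdef
  set B : ℝ → ℝ := fun s => v (helS s x) 1 with hBdef
  set C : ℝ → ℝ := fun s => v (helS s x) 2 with hCdef
  have hA : ∀ t, HasDerivAt A (B t) t := fun t => by simpa using key t 0
  have hB : ∀ t, HasDerivAt B (-(A t)) t := fun t => by simpa using key t 1
  have hC : ∀ t, HasDerivAt C 0 t := fun t => by simpa using key t 2
  -- conserved quantities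
  have hu : ∀ t, HasDerivAt (fun s => A s * Real.cos s - B s * Real.sin s) 0 t := by
    intro t
    have := ((hA t).mul (hasDerivAt_cos t)).sub ((hB t).mul (hasDerivAt_sin t))
    convert this using 1
    · rfl
    · rfl
    · rfl
    ring
  have hw : ∀ t, HasDerivAt (fun s => A s * Real.sin s + B s * Real.cos s) 0 t := by
    intro t
    have := ((hA t).mul (hasDerivAt_sin t)).add ((hB t).mul (hasDerivAt_cos t))
    convert this using 1
    · rfl
    · rfl
    · rfl
    ring
  have const_of : ∀ f : ℝ → ℝ, (∀ t, HasDerivAt f 0 t) → ∀ t, f t = f 0 := by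
    intro f hf t
    exact is_const_of_deriv_eq_zero (fun s => (hf s).differentiableAt)
      (fun s => (hf s).deriv) t 0
  have hu0 := const_of _ hu θ
  have hw0 := const_of _ hw θ
  have hc0 := const_of C hC θ
  have h0 : helS 0 x = x := by
    funext i; fin_cases i <;> simp [helS]
  have hA0 : A 0 = v x 0 := by simp [hAdef, h0]
  have hB0 : B 0 = v x 1 := by simp [hBdef, h0]
  have hC0 : C 0 = v x 2 := by simp [hCdef, h0]
  rw [hA0] at hu0
  rw [hB0] at hw0
  rw [hC0] at hc0
  simp only [Real.cos_zero, Real.sin_zero, mul_one, mul_zero, sub_zero, add_zero, zero_add] at hu0 hw0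
  have hpy := Real.sin_sq_add_cos_sq θ
  funext i
  fin_cases i
  · show A θ = helR θ (v x) 0
    simp only [helR, Matrix.cons_val_zero]
    linear_combination Real.cos θ * hu0 + Real.sin θ * hw0 - A θ * hpy
  · show B θ = helR θ (v x) 1
    simp only [helR, Matrix.cons_val_one, Matrix.head_cons, Matrix.cons_val_zero]
    linear_combination -Real.sin θ * hu0 + Real.cos θ * hw0 - B θ * hpy
  · show C θ = helR θ (v x) 2
    simpa [helR] using hc0
end

section
/- Ladyzhenskaya-type inequality for helical functions: if u ∈ H¹(D) is a helical function on D = B₁ × [0, 2π] (B₁ the unit disk) vanishing on the lateral boundary, then ‖u‖_{L⁴(D)} ≤ C ‖u‖_{L²(D)}^{1/2} ‖∇_h u‖_{L²(D)}^{1/2}, where ∇_h = (∂_{x₁}, ∂_{x₂}) and C is an absolute constant. -/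
open Real MeasureTheory

/-- The helical cylinder `D = B₁ × (0, 2π)`. -/
def helD : Set (Fin 3 → ℝ) :=
  {x | x 0 ^ 2 + x 1 ^ 2 < 1 ∧ 0 < x 2 ∧ x 2 < 2 * Real.pi}

open Set intervalIntegral


def D2 : Set (ℝ × ℝ) := {p : ℝ × ℝ | p.1 ^ 2 + p.2 ^ 2 < 1}

lemma measurableSet_D2 : MeasurableSet D2 := by
  apply measurableSet_lt (by fun_prop) (by fun_prop)

lemma D2_subset : D2 ⊆ Icc (-1, -1) (1, 1) := by
  rintro ⟨a, b⟩ h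
  simp only [D2, mem_setOf_eq] at h
  simp only [mem_Icc, Prod.mk_le_mk]
  refine ⟨⟨?_, ?_⟩, ?_, ?_⟩ <;> nlinarith [sq_nonneg a, sq_nonneg b]

lemma integrableOn_D2 {f : ℝ × ℝ → ℝ} (hf : Continuous f) : IntegrableOn f D2 :=
  (hf.continuousOn.integrableOn_compact isCompact_Icc).mono_set D2_subset

lemma hasDerivAt_fst {W : ℝ × ℝ → ℝ} (hW : ContDiff ℝ 1 W) (b a : ℝ) :
    HasDerivAt (fun a => W (a, b)) (fderiv ℝ W (a, b) (1, 0)) a := by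
  have h1 : HasDerivAt (fun a : ℝ => (a, b)) ((1 : ℝ), (0 : ℝ)) a :=
    (hasDerivAt_id a).prodMk (hasDerivAt_const a b)
  exact ((hW.differentiable one_ne_zero (a, b)).hasFDerivAt).comp_hasDerivAt a h1

lemma hasDerivAt_snd {W : ℝ × ℝ → ℝ} (hW : ContDiff ℝ 1 W) (a b : ℝ) :
    HasDerivAt (fun b => W (a, b)) (fderiv ℝ W (a, b) (0, 1)) b := by
  have h1 : HasDerivAt (fun b : ℝ => (a, b)) ((0 : ℝ), (1 : ℝ)) b :=
    (hasDerivAt_const b a).prodMk (hasDerivAt_id b)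
  exact ((hW.differentiable one_ne_zero (a, b)).hasFDerivAt).comp_hasDerivAt b h1

noncomputable def W1 (W : ℝ × ℝ → ℝ) (p : ℝ × ℝ) : ℝ := fderiv ℝ W p (1, 0)
noncomputable def W2 (W : ℝ × ℝ → ℝ) (p : ℝ × ℝ) : ℝ := fderiv ℝ W p (0, 1)
noncomputable def Phi1 (W : ℝ × ℝ → ℝ) : ℝ × ℝ → ℝ :=
  D2.indicator (fun q => 2 * |W q| * |W1 W q|)
noncomputable def Phi2 (W : ℝ × ℝ → ℝ) : ℝ × ℝ → ℝ :=
  D2.indicator (fun q => 2 * |W q| * |W2 W q|)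

lemma W1_continuous {W : ℝ × ℝ → ℝ} (hW : ContDiff ℝ 1 W) : Continuous (W1 W) :=
  (hW.continuous_fderiv one_ne_zero).clm_apply continuous_const

lemma W2_continuous {W : ℝ × ℝ → ℝ} (hW : ContDiff ℝ 1 W) : Continuous (W2 W) :=
  (hW.continuous_fderiv one_ne_zero).clm_apply continuous_const

lemma chord_fst {W : ℝ × ℝ → ℝ} (hW : ContDiff ℝ 1 W)
    (h0 : ∀ p : ℝ × ℝ, p.1 ^ 2 + p.2 ^ 2 = 1 → W p = 0)
    {p : ℝ × ℝ} (hp : p ∈ D2) :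
    W p ^ 2 ≤ ∫ t, Phi1 W (t, p.2) := by
  obtain ⟨a, b⟩ := p
  simp only [D2, mem_setOf_eq] at hp
  set r := Real.sqrt (1 - b ^ 2) with hrdef
  have hb2 : b ^ 2 < 1 := by nlinarith [sq_nonneg a]
  have hr2 : r ^ 2 = 1 - b ^ 2 := Real.sq_sqrt (by linarith)
  have hrpos : 0 < r := Real.sqrt_pos.2 (by linarith)
  have har : |a| < r := by
    have h1 : a ^ 2 < r ^ 2 := by nlinarith
    have h2 : Real.sqrt (a ^ 2) < Real.sqrt (r ^ 2) := Real.sqrt_lt_sqrt (sq_nonneg a) h1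
    rwa [Real.sqrt_sq_eq_abs, Real.sqrt_sq hrpos.le] at h2
  have haL : -r < a := by have := abs_lt.mp har; linarith [this.1]
  have haR : a < r := (abs_lt.mp har).2
  have hWc := hW.continuous
  have hW1c := W1_continuous hW
  have hcont1 : Continuous fun t : ℝ => 2 * W (t, b) * W1 W (t, b) := by
    apply Continuous.mul
    · exact continuous_const.mul (hWc.comp (continuous_id.prodMk continuous_const))
    · exact hW1c.comp (continuous_id.prodMk continuous_const)
  have hcont2 : Continuous fun t : ℝ => 2 * |W (t, b)| * |W1 W (t, b)| := by
    apply Continuous.mul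
    · exact continuous_const.mul (hWc.comp (continuous_id.prodMk continuous_const)).abs
    · exact (hW1c.comp (continuous_id.prodMk continuous_const)).abs
  have key : ∫ t in (-r)..a, 2 * W (t, b) * W1 W (t, b)
      = W (a, b) ^ 2 - W (-r, b) ^ 2 := by
    apply intervalIntegral.integral_eq_sub_of_hasDerivAt
    · intro t _
      have h := (hasDerivAt_fst hW b t).pow 2
      simpa [W1, Pi.pow_def] using h
    · exact hcont1.intervalIntegrable _ _
  have hW0 : W (-r, b) = 0 := by
    apply h0 (-r, b)
    have : (-r) ^ 2 = r ^ 2 := by ring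
    simp only [this]
    linarith [hr2]
  have habs : W (a, b) ^ 2 ≤ ∫ t in (-r)..r, 2 * |W (t, b)| * |W1 W (t, b)| := by
    have step1 : W (a, b) ^ 2 = ∫ t in (-r)..a, 2 * W (t, b) * W1 W (t, b) := by
      rw [key, hW0]; ring
    rw [step1]
    calc ∫ t in (-r)..a, 2 * W (t, b) * W1 W (t, b)
        ≤ ∫ t in (-r)..a, 2 * |W (t, b)| * |W1 W (t, b)| := by
          apply intervalIntegral.integral_mono_on (by linarith)
            (hcont1.intervalIntegrable _ _) (hcont2.intervalIntegrable _ _)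
          intro x _
          calc 2 * W (x, b) * W1 W (x, b) ≤ |2 * W (x, b) * W1 W (x, b)| := le_abs_self _
            _ = 2 * |W (x, b)| * |W1 W (x, b)| := by rw [abs_mul, abs_mul, abs_two]
      _ ≤ ∫ t in (-r)..r, 2 * |W (t, b)| * |W1 W (t, b)| := by
          apply intervalIntegral.integral_mono_interval le_rfl (by linarith) (by linarith)
          · apply ae_of_all
            intro x
            positivity
          · exact hcont2.intervalIntegrable _ _
  have hset : (fun t : ℝ => Phi1 W (t, b))
      = (Ioo (-r) r).indicator (fun t => 2 * |W (t, b)| * |W1 W (t, b)|) := by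
    funext t
    by_cases ht : t ∈ Ioo (-r) r
    · have htD : (t, b) ∈ D2 := by
        have h1 := ht.1; have h2 := ht.2
        have : t ^ 2 < r ^ 2 := by nlinarith
        simp only [D2, mem_setOf_eq]
        nlinarith
      rw [indicator_of_mem ht, Phi1, indicator_of_mem htD]
    · have htD : (t, b) ∉ D2 := by
        simp only [mem_Ioo, not_and_or, not_lt] at ht
        simp only [D2, mem_setOf_eq, not_lt]
        rcases ht with h | h
        · nlinarith
        · nlinarith
      rw [indicator_of_notMem ht, Phi1, indicator_of_notMem htD]
  calc W (a, b) ^ 2 ≤ ∫ t in (-r)..r, 2 * |W (t, b)| * |W1 W (t, b)| := habs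
    _ = ∫ t in Ioo (-r) r, 2 * |W (t, b)| * |W1 W (t, b)| := by
        rw [intervalIntegral.integral_of_le (by linarith), MeasureTheory.integral_Ioc_eq_integral_Ioo]
    _ = ∫ t, Phi1 W (t, b) := by
        rw [hset, MeasureTheory.integral_indicator measurableSet_Ioo]

lemma chord_snd {W : ℝ × ℝ → ℝ} (hW : ContDiff ℝ 1 W)
    (h0 : ∀ p : ℝ × ℝ, p.1 ^ 2 + p.2 ^ 2 = 1 → W p = 0)
    {p : ℝ × ℝ} (hp : p ∈ D2) :
    W p ^ 2 ≤ ∫ t, Phi2 W (p.1, t) := by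
  obtain ⟨a, b⟩ := p
  simp only [D2, mem_setOf_eq] at hp
  set r := Real.sqrt (1 - a ^ 2) with hrdef
  have hb2 : a ^ 2 < 1 := by nlinarith [sq_nonneg b]
  have hr2 : r ^ 2 = 1 - a ^ 2 := Real.sq_sqrt (by linarith)
  have hrpos : 0 < r := Real.sqrt_pos.2 (by linarith)
  have har : |b| < r := by
    have h1 : b ^ 2 < r ^ 2 := by nlinarith
    have h2 : Real.sqrt (b ^ 2) < Real.sqrt (r ^ 2) := Real.sqrt_lt_sqrt (sq_nonneg b) h1
    rwa [Real.sqrt_sq_eq_abs, Real.sqrt_sq hrpos.le] at h2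
  have haL : -r < b := by have := abs_lt.mp har; linarith [this.1]
  have haR : b < r := (abs_lt.mp har).2
  have hWc := hW.continuous
  have hW1c := W2_continuous hW
  have hcont1 : Continuous fun t : ℝ => 2 * W (a, t) * W2 W (a, t) := by
    apply Continuous.mul
    · exact continuous_const.mul (hWc.comp (continuous_const.prodMk continuous_id))
    · exact hW1c.comp (continuous_const.prodMk continuous_id)
  have hcont2 : Continuous fun t : ℝ => 2 * |W (a, t)| * |W2 W (a, t)| := by
    apply Continuous.mul
    · exact continuous_const.mul (hWc.comp (continuous_const.prodMk continuous_id)).abs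
    · exact (hW1c.comp (continuous_const.prodMk continuous_id)).abs
  have key : ∫ t in (-r)..b, 2 * W (a, t) * W2 W (a, t)
      = W (a, b) ^ 2 - W (a, -r) ^ 2 := by
    apply intervalIntegral.integral_eq_sub_of_hasDerivAt
    · intro t _
      have h := (hasDerivAt_snd hW a t).pow 2
      simpa [W2, Pi.pow_def] using h
    · exact hcont1.intervalIntegrable _ _
  have hW0 : W (a, -r) = 0 := by
    apply h0 (a, -r)
    have : (-r) ^ 2 = r ^ 2 := by ring
    simp only [this]
    linarith [hr2]
  have habs : W (a, b) ^ 2 ≤ ∫ t in (-r)..r, 2 * |W (a, t)| * |W2 W (a, t)| := by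
    have step1 : W (a, b) ^ 2 = ∫ t in (-r)..b, 2 * W (a, t) * W2 W (a, t) := by
      rw [key, hW0]; ring
    rw [step1]
    calc ∫ t in (-r)..b, 2 * W (a, t) * W2 W (a, t)
        ≤ ∫ t in (-r)..b, 2 * |W (a, t)| * |W2 W (a, t)| := by
          apply intervalIntegral.integral_mono_on (by linarith)
            (hcont1.intervalIntegrable _ _) (hcont2.intervalIntegrable _ _)
          intro x _
          calc 2 * W (a, x) * W2 W (a, x) ≤ |2 * W (a, x) * W2 W (a, x)| := le_abs_self _
            _ = 2 * |W (a, x)| * |W2 W (a, x)| := by rw [abs_mul, abs_mul, abs_two]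
      _ ≤ ∫ t in (-r)..r, 2 * |W (a, t)| * |W2 W (a, t)| := by
          apply intervalIntegral.integral_mono_interval le_rfl (by linarith) (by linarith)
          · apply ae_of_all
            intro x
            positivity
          · exact hcont2.intervalIntegrable _ _
  have hset : (fun t : ℝ => Phi2 W (a, t))
      = (Ioo (-r) r).indicator (fun t => 2 * |W (a, t)| * |W2 W (a, t)|) := by
    funext t
    by_cases ht : t ∈ Ioo (-r) r
    · have htD : (a, t) ∈ D2 := by
        have h1 := ht.1; have h2 := ht.2
        have : t ^ 2 < r ^ 2 := by nlinarith
        simp only [D2, mem_setOf_eq]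
        nlinarith
      rw [indicator_of_mem ht, Phi2, indicator_of_mem htD]
    · have htD : (a, t) ∉ D2 := by
        simp only [mem_Ioo, not_and_or, not_lt] at ht
        simp only [D2, mem_setOf_eq, not_lt]
        rcases ht with h | h
        · nlinarith
        · nlinarith
      rw [indicator_of_notMem ht, Phi2, indicator_of_notMem htD]
  calc W (a, b) ^ 2 ≤ ∫ t in (-r)..r, 2 * |W (a, t)| * |W2 W (a, t)| := habs
    _ = ∫ t in Ioo (-r) r, 2 * |W (a, t)| * |W2 W (a, t)| := by
        rw [intervalIntegral.integral_of_le (by linarith), MeasureTheory.integral_Ioc_eq_integral_Ioo]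
    _ = ∫ t, Phi2 W (a, t) := by
        rw [hset, MeasureTheory.integral_indicator measurableSet_Ioo]

lemma holder_D2 {f g : ℝ × ℝ → ℝ} (hf : Continuous f) (hg : Continuous g) :
    ∫ p in D2, |f p| * |g p| ≤
      Real.sqrt (∫ p in D2, f p ^ 2) * Real.sqrt (∫ p in D2, g p ^ 2) := by
  have h2 : (2 : ℝ).HolderConjugate 2 := Real.holderConjugate_iff.2 ⟨one_lt_two, by norm_num⟩
  have hrw : ∀ x : ℝ, |x| ^ (2 : ℝ) = x ^ 2 := fun x => by
    rw [Real.rpow_two, sq_abs]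
  have hmem : ∀ {h : ℝ × ℝ → ℝ}, Continuous h →
      MemLp (fun p => |h p|) (ENNReal.ofReal 2) (volume.restrict D2) := by
    intro h hc
    rw [show ENNReal.ofReal 2 = 2 by norm_num]
    apply (memLp_two_iff_integrable_sq hc.abs.aestronglyMeasurable).2
    have : Integrable (fun p => |h p| ^ 2) (volume.restrict D2) :=
      integrableOn_D2 (by fun_prop)
    exact this
  have H := integral_mul_le_Lp_mul_Lq_of_nonneg h2
    (ae_of_all _ fun p => abs_nonneg (f p)) (ae_of_all _ fun p => abs_nonneg (g p))
    (hmem hf) (hmem hg)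
  simp only [hrw] at H
  calc ∫ p in D2, |f p| * |g p|
      ≤ (∫ p in D2, f p ^ 2) ^ ((1:ℝ) / 2) * (∫ p in D2, g p ^ 2) ^ ((1:ℝ) / 2) := H
    _ = Real.sqrt (∫ p in D2, f p ^ 2) * Real.sqrt (∫ p in D2, g p ^ 2) := by
        rw [Real.sqrt_eq_rpow, Real.sqrt_eq_rpow]

set_option maxHeartbeats 1000000 in
lemma lady2 {W : ℝ × ℝ → ℝ} (hW : ContDiff ℝ 1 W)
    (h0 : ∀ p : ℝ × ℝ, p.1 ^ 2 + p.2 ^ 2 = 1 → W p = 0) :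
    ∫ p in D2, W p ^ 4 ≤
      2 * (∫ p in D2, W p ^ 2) * (∫ p in D2, (W1 W p ^ 2 + W2 W p ^ 2)) := by
  have hWc := hW.continuous
  have hW1c := W1_continuous hW
  have hW2c := W2_continuous hW
  set F : ℝ → ℝ := fun b => ∫ a, Phi1 W (a, b) with hFdef
  set G : ℝ → ℝ := fun a => ∫ b, Phi2 W (a, b) with hGdef
  have hc1 : Continuous fun q : ℝ × ℝ => 2 * |W q| * |W1 W q| := by fun_prop
  have hc2 : Continuous fun q : ℝ × ℝ => 2 * |W q| * |W2 W q| := by fun_prop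
  have hΦ1 : Integrable (Phi1 W) :=
    (integrableOn_D2 hc1).integrable_indicator measurableSet_D2
  have hΦ2 : Integrable (Phi2 W) :=
    (integrableOn_D2 hc2).integrable_indicator measurableSet_D2
  have hΦ1' : Integrable (Phi1 W) (volume.prod volume) := by
    rwa [← Measure.volume_eq_prod]
  have hΦ2' : Integrable (Phi2 W) (volume.prod volume) := by
    rwa [← Measure.volume_eq_prod]
  have hF : Integrable F := by
    have := hΦ1'.integral_prod_right
    exact this
  have hG : Integrable G := by
    have := hΦ2'.integral_prod_left
    exact this
  have hFnn : ∀ b, 0 ≤ F b := fun b =>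
    integral_nonneg fun a => indicator_nonneg (fun q _ => by positivity) _
  have hGnn : ∀ a, 0 ≤ G a := fun a =>
    integral_nonneg fun b => indicator_nonneg (fun q _ => by positivity) _
  have hpt : ∀ q : ℝ × ℝ, D2.indicator (fun p => W p ^ 4) q ≤ G q.1 * F q.2 := by
    intro q
    by_cases hq : q ∈ D2
    · rw [indicator_of_mem hq]
      have h1 : W q ^ 2 ≤ F q.2 := chord_fst hW h0 hq
      have h2 : W q ^ 2 ≤ G q.1 := chord_snd hW h0 hq
      calc W q ^ 4 = W q ^ 2 * W q ^ 2 := by ring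
        _ ≤ G q.1 * F q.2 := mul_le_mul h2 h1 (sq_nonneg _) (hGnn _)
    · rw [indicator_of_notMem hq]
      exact mul_nonneg (hGnn _) (hFnn _)
  have hInd : Integrable (D2.indicator fun p => W p ^ 4) :=
    (integrableOn_D2 (by fun_prop)).integrable_indicator measurableSet_D2
  have hGF : Integrable (fun q : ℝ × ℝ => G q.1 * F q.2) := by
    rw [Measure.volume_eq_prod]
    exact hG.mul_prod hF
  have step2 : ∫ q : ℝ × ℝ, D2.indicator (fun p => W p ^ 4) q ≤ ∫ q : ℝ × ℝ, G q.1 * F q.2 :=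
    integral_mono hInd hGF hpt
  have main1 : ∫ p in D2, W p ^ 4 ≤ (∫ a, G a) * (∫ b, F b) := by
    rw [← MeasureTheory.integral_indicator measurableSet_D2]
    refine le_trans step2 (le_of_eq ?_)
    rw [Measure.volume_eq_prod]
    exact integral_prod_mul G F
  have hFI : ∫ b, F b = ∫ p in D2, 2 * |W p| * |W1 W p| := by
    calc ∫ b, F b = ∫ q, Phi1 W q ∂(volume.prod volume) := by
          rw [MeasureTheory.integral_prod _ hΦ1']
          rw [hFdef]
          exact (MeasureTheory.integral_integral_swap (f := fun a b => Phi1 W (a, b))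
            (by exact hΦ1')).symm
      _ = ∫ q, Phi1 W q := by rw [← Measure.volume_eq_prod]
      _ = ∫ p in D2, 2 * |W p| * |W1 W p| := integral_indicator measurableSet_D2
  have hGI : ∫ a, G a = ∫ p in D2, 2 * |W p| * |W2 W p| := by
    calc ∫ a, G a = ∫ q, Phi2 W q ∂(volume.prod volume) := by
          rw [MeasureTheory.integral_prod _ hΦ2']
      _ = ∫ q, Phi2 W q := by rw [← Measure.volume_eq_prod]
      _ = ∫ p in D2, 2 * |W p| * |W2 W p| := integral_indicator measurableSet_D2
  set A := ∫ p in D2, W p ^ 2 with hAdef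
  set B := ∫ p in D2, W1 W p ^ 2 with hBdef
  set C := ∫ p in D2, W2 W p ^ 2 with hCdef
  have hA : 0 ≤ A := setIntegral_nonneg measurableSet_D2 fun p _ => sq_nonneg _
  have hB : 0 ≤ B := setIntegral_nonneg measurableSet_D2 fun p _ => sq_nonneg _
  have hC : 0 ≤ C := setIntegral_nonneg measurableSet_D2 fun p _ => sq_nonneg _
  have hI1 : ∫ p in D2, 2 * |W p| * |W1 W p| ≤ 2 * (Real.sqrt A * Real.sqrt B) := by
    have h := holder_D2 hWc hW1c
    calc ∫ p in D2, 2 * |W p| * |W1 W p| = 2 * ∫ p in D2, |W p| * |W1 W p| := by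
          rw [← MeasureTheory.integral_const_mul]
          congr 1 with p
          ring
      _ ≤ 2 * (Real.sqrt A * Real.sqrt B) := by
          apply mul_le_mul_of_nonneg_left _ (by norm_num)
          exact h
  have hI2 : ∫ p in D2, 2 * |W p| * |W2 W p| ≤ 2 * (Real.sqrt A * Real.sqrt C) := by
    have h := holder_D2 hWc hW2c
    calc ∫ p in D2, 2 * |W p| * |W2 W p| = 2 * ∫ p in D2, |W p| * |W2 W p| := by
          rw [← MeasureTheory.integral_const_mul]
          congr 1 with p
          ring
      _ ≤ 2 * (Real.sqrt A * Real.sqrt C) := by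
          apply mul_le_mul_of_nonneg_left _ (by norm_num)
          exact h
  have hFnn' : 0 ≤ ∫ b, F b := integral_nonneg hFnn
  have hGnn' : 0 ≤ ∫ a, G a := integral_nonneg hGnn
  have hsplit : ∫ p in D2, (W1 W p ^ 2 + W2 W p ^ 2) = B + C := by
    rw [hBdef, hCdef, ← integral_add (integrableOn_D2 (by fun_prop)) (integrableOn_D2 (by fun_prop))]
  rw [hsplit]
  have sqA : Real.sqrt A * Real.sqrt A = A := Real.mul_self_sqrt hA
  have sqB := Real.sq_sqrt hB
  have sqC := Real.sq_sqrt hC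
  have hBC : Real.sqrt B * Real.sqrt C ≤ (B + C) / 2 := by
    nlinarith [sq_nonneg (Real.sqrt B - Real.sqrt C), Real.sqrt_nonneg B, Real.sqrt_nonneg C]
  calc ∫ p in D2, W p ^ 4 ≤ (∫ a, G a) * (∫ b, F b) := main1
    _ ≤ (2 * (Real.sqrt A * Real.sqrt C)) * (2 * (Real.sqrt A * Real.sqrt B)) := by
        apply mul_le_mul (hGI ▸ hI2) (hFI ▸ hI1) hFnn'
        positivity
    _ = 4 * A * (Real.sqrt B * Real.sqrt C) := by
        linear_combination (4 * Real.sqrt B * Real.sqrt C) * sqA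
    _ ≤ 4 * A * ((B + C) / 2) := by
        apply mul_le_mul_of_nonneg_left hBC
        positivity
    _ = 2 * A * (B + C) := by ring


noncomputable def rotP (θ : ℝ) : ℝ × ℝ → ℝ × ℝ :=
  fun p => (p.1 * Real.cos θ + p.2 * Real.sin θ, -p.1 * Real.sin θ + p.2 * Real.cos θ)

lemma rotP_inv (θ : ℝ) (p : ℝ × ℝ) : rotP (-θ) (rotP θ p) = p := by
  have h := Real.sin_sq_add_cos_sq θ
  simp only [rotP, Real.cos_neg, Real.sin_neg]
  ext
  · dsimp only; linear_combination p.1 * h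
  · dsimp only; linear_combination p.2 * h

noncomputable def rotH (θ : ℝ) : ℝ × ℝ ≃ₜ ℝ × ℝ where
  toFun := rotP θ
  invFun := rotP (-θ)
  left_inv := rotP_inv θ
  right_inv := by intro p; have := rotP_inv (-θ) p; rwa [neg_neg] at this
  continuous_toFun := by unfold rotP; fun_prop
  continuous_invFun := by unfold rotP; fun_prop

noncomputable def e2m : (Fin 2 → ℝ) ≃ᵐ ℝ × ℝ := MeasurableEquiv.finTwoArrow

lemma rotP_measurePreserving (θ : ℝ) : MeasurePreserving (rotP θ) volume volume := by
  have hdet : (!![Real.cos θ, Real.sin θ; -Real.sin θ, Real.cos θ] : Matrix (Fin 2) (Fin 2) ℝ).det = 1 := by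
    simp [Matrix.det_fin_two_of]; nlinarith [Real.sin_sq_add_cos_sq θ]
  have hL : MeasurePreserving (Matrix.toLin' !![Real.cos θ, Real.sin θ; -Real.sin θ, Real.cos θ]) volume volume := by
    refine ⟨(LinearMap.continuous_on_pi _).measurable, ?_⟩
    rw [Real.map_matrix_volume_pi_eq_smul_volume_pi (by rw [hdet]; norm_num)]
    simp [hdet]
  have h2 : MeasurePreserving (⇑e2m) volume volume := volume_preserving_finTwoArrow ℝ
  have h2s : MeasurePreserving (⇑e2m.symm) volume volume := h2.symm e2m
  have heq : rotP θ = ⇑e2m ∘ (Matrix.toLin' !![Real.cos θ, Real.sin θ; -Real.sin θ, Real.cos θ]) ∘ ⇑e2m.symm := by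
    funext p
    simp [rotP, e2m, MeasurableEquiv.finTwoArrow, Matrix.toLin'_apply, Matrix.mulVec, dotProduct,
      Fin.sum_univ_two]
    ring_nf
    exact ⟨trivial, trivial⟩
  rw [heq]
  exact (h2.comp hL).comp h2s

lemma rotP_preimage_D2 (θ : ℝ) : rotP θ ⁻¹' D2 = D2 := by
  have h := Real.sin_sq_add_cos_sq θ
  ext p
  simp only [D2, mem_preimage, mem_setOf_eq, rotP]
  constructor <;> intro hx <;> nlinarith [sq_nonneg p.1, sq_nonneg p.2]

noncomputable def Psie : (Fin 3 → ℝ) ≃ᵐ ℝ × (ℝ × ℝ) :=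
  (MeasurableEquiv.piFinSuccAbove (fun _ => ℝ) 2).trans
    ((MeasurableEquiv.refl ℝ).prodCongr MeasurableEquiv.finTwoArrow)

lemma Psie_apply (x : Fin 3 → ℝ) : Psie x = (x 2, (x 0, x 1)) := by
  have h3 : (MeasurableEquiv.piFinSuccAbove (fun _ => ℝ) 2) x = (x 2, ![x 0, x 1]) := by
    simp [MeasurableEquiv.piFinSuccAbove, MeasurableEquiv.coe_mk, Fin.insertNthEquiv]
    ext i
    fin_cases i <;> simp [Fin.succAbove] <;> rfl
  have : Psie x = Prod.map id (⇑(MeasurableEquiv.finTwoArrow (α := ℝ)))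
      ((MeasurableEquiv.piFinSuccAbove (fun _ => ℝ) 2) x) := rfl
  rw [this, h3]
  simp [MeasurableEquiv.finTwoArrow]

lemma Psie_measurePreserving :
    MeasurePreserving (⇑Psie) volume (volume.prod (volume.prod volume)) := by
  have h1 := measurePreserving_piFinSuccAbove (fun _ : Fin 3 => (volume : Measure ℝ)) 2
  have h2 := (MeasurePreserving.id (volume : Measure ℝ)).prod (volume_preserving_finTwoArrow ℝ)
  have heq : ⇑Psie = (Prod.map id ⇑(MeasurableEquiv.finTwoArrow (α := ℝ))) ∘
      ⇑(MeasurableEquiv.piFinSuccAbove (fun _ => ℝ) 2) := rfl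
  rw [heq]
  exact h2.comp h1

lemma helD_subset : helD ⊆ Icc (fun _ => (-7:ℝ)) (fun _ => 7) := by
  intro x hx
  obtain ⟨h1, h2, h3⟩ := hx
  have hpi : (2:ℝ) * Real.pi < 7 := by nlinarith [Real.pi_lt_d2]
  constructor <;> intro i <;> fin_cases i <;> simp <;>
    nlinarith [sq_nonneg (x 0), sq_nonneg (x 1)]

lemma integrableOn_helD {v : (Fin 3 → ℝ) → ℝ} (hv : Continuous v) : IntegrableOn v helD :=
  (hv.continuousOn.integrableOn_compact isCompact_Icc).mono_set helD_subset

lemma helSlice {v : (Fin 3 → ℝ) → ℝ} (hv : Continuous v)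
    (hinv : ∀ θ x, v (helS θ x) = v x) :
    ∫ x in helD, v x = (2 * Real.pi) * ∫ p in D2, v ![p.1, p.2, 0] := by
  have hgluec : Continuous fun q : ℝ × (ℝ × ℝ) => v ![q.2.1, q.2.2, q.1] := by
    apply hv.comp
    apply continuous_pi
    intro i
    fin_cases i <;> simp <;> fun_prop
  have hpre : helD = ⇑Psie ⁻¹' ((Ioo 0 (2*Real.pi)) ×ˢ D2) := by
    ext x
    simp [helD, D2, Psie_apply, Set.mem_prod, mem_Ioo]
    tauto
  have hxeq : ∀ x : Fin 3 → ℝ, ![x 0, x 1, x 2] = x := by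
    intro x; funext i; fin_cases i <;> rfl
  have hfun : ∀ x : Fin 3 → ℝ, v ![(Psie x).2.1, (Psie x).2.2, (Psie x).1] = v x := by
    intro x
    rw [Psie_apply]
    dsimp only
    rw [hxeq]
  have step1 : ∫ x in helD, v x
      = ∫ q in (Ioo 0 (2*Real.pi)) ×ˢ D2, v ![q.2.1, q.2.2, q.1]
          ∂((volume : Measure ℝ).prod ((volume : Measure ℝ).prod (volume : Measure ℝ))) := by
    rw [hpre]
    rw [← Psie_measurePreserving.setIntegral_preimage_emb Psie.measurableEmbedding
      (fun q => v ![q.2.1, q.2.2, q.1]) ((Ioo 0 (2*Real.pi)) ×ˢ D2)]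
    simp only [hfun]
  have hS_int : IntegrableOn (fun q : ℝ × (ℝ × ℝ) => v ![q.2.1, q.2.2, q.1])
      ((Ioo 0 (2*Real.pi)) ×ˢ D2) ((volume : Measure ℝ).prod ((volume : Measure ℝ).prod (volume : Measure ℝ))) := by
    rw [← Measure.volume_eq_prod]
    apply (hgluec.continuousOn.integrableOn_compact (isCompact_Icc.prod isCompact_Icc)).mono_set
    exact prod_mono Ioo_subset_Icc_self D2_subset
  have step2 : ∫ q in (Ioo 0 (2*Real.pi)) ×ˢ D2, v ![q.2.1, q.2.2, q.1]
        ∂((volume : Measure ℝ).prod ((volume : Measure ℝ).prod (volume : Measure ℝ)))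
      = ∫ z in Ioo 0 (2*Real.pi), ∫ p in D2, v ![p.1, p.2, z] :=
    setIntegral_prod _ hS_int
  have hconst : ∀ z : ℝ, ∫ p in D2, v ![p.1, p.2, z] = ∫ p in D2, v ![p.1, p.2, 0] := by
    intro z
    have hr : ∀ p : ℝ × ℝ, v ![(rotP z p).1, (rotP z p).2, z] = v ![p.1, p.2, 0] := by
      intro p
      have h := hinv z ![p.1, p.2, 0]
      have harg : helS z ![p.1, p.2, 0] = ![(rotP z p).1, (rotP z p).2, z] := by
        funext i; fin_cases i <;> simp [helS, rotP] <;> ring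
      rw [harg] at h
      exact h
    calc ∫ p in D2, v ![p.1, p.2, z]
        = ∫ p in rotP z ⁻¹' D2, v ![(rotP z p).1, (rotP z p).2, z] :=
          ((rotP_measurePreserving z).setIntegral_preimage_emb
            (rotH z).measurableEmbedding _ D2).symm
      _ = ∫ p in D2, v ![p.1, p.2, 0] := by
          rw [rotP_preimage_D2]
          simp only [hr]
  rw [step1, step2]
  simp_rw [hconst]
  rw [setIntegral_const, Real.volume_real_Ioo, sub_zero, max_eq_left (by positivity),
    smul_eq_mul]

noncomputable def iotaL : (ℝ × ℝ) →L[ℝ] (Fin 3 → ℝ) :=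
  ContinuousLinearMap.pi
    (fun i => ![ContinuousLinearMap.fst ℝ ℝ ℝ, ContinuousLinearMap.snd ℝ ℝ ℝ, 0] i)

lemma iotaL_apply (p : ℝ × ℝ) : iotaL p = ![p.1, p.2, 0] := by
  funext i
  fin_cases i <;> simp [iotaL]

lemma iotaL_e1 : iotaL (1, 0) = Pi.single 0 1 := by
  rw [iotaL_apply]
  funext i
  fin_cases i <;> simp [Pi.single_apply]

lemma iotaL_e2 : iotaL (0, 1) = Pi.single 1 1 := by
  rw [iotaL_apply]
  funext i
  fin_cases i <;> simp [Pi.single_apply]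

noncomputable def AL (θ : ℝ) : (Fin 3 → ℝ) →L[ℝ] (Fin 3 → ℝ) :=
  ContinuousLinearMap.pi
    (fun i => ![Real.cos θ • ContinuousLinearMap.proj 0 + Real.sin θ • ContinuousLinearMap.proj 1,
      (-Real.sin θ) • ContinuousLinearMap.proj 0 + Real.cos θ • ContinuousLinearMap.proj 1,
      ContinuousLinearMap.proj 2] i)

lemma AL_apply (θ : ℝ) (x : Fin 3 → ℝ) :
    AL θ x = ![x 0 * Real.cos θ + x 1 * Real.sin θ,
      -(x 0) * Real.sin θ + x 1 * Real.cos θ, x 2] := by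
  funext i
  fin_cases i <;> simp [AL] <;> ring

lemma helS_eq_affine (θ : ℝ) : helS θ = fun x => AL θ x + ![0, 0, θ] := by
  funext x i
  rw [AL_apply]
  fin_cases i <;> simp [helS]

lemma hasFDerivAt_helS (θ : ℝ) (x : Fin 3 → ℝ) : HasFDerivAt (helS θ) (AL θ) x := by
  rw [helS_eq_affine]
  exact (AL θ).hasFDerivAt.add_const _

lemma fderiv_helS_transfer {u : (Fin 3 → ℝ) → ℝ} (hu : ContDiff ℝ 1 u)
    (hinv : ∀ (θ : ℝ) (x : Fin 3 → ℝ), u (helS θ x) = u x) (θ : ℝ) (x : Fin 3 → ℝ)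
    (v : Fin 3 → ℝ) :
    fderiv ℝ u x v = fderiv ℝ u (helS θ x) (AL θ v) := by
  have hcomp : HasFDerivAt (u ∘ helS θ) ((fderiv ℝ u (helS θ x)).comp (AL θ)) x :=
    ((hu.differentiable one_ne_zero _).hasFDerivAt).comp x (hasFDerivAt_helS θ x)
  have hue : u ∘ helS θ = u := funext (hinv θ)
  have := hcomp.fderiv
  rw [hue] at this
  rw [this]
  rfl

lemma AL_single0 (θ : ℝ) :
    AL θ (Pi.single 0 1) = Real.cos θ • (Pi.single 0 1 : Fin 3 → ℝ)
      + (-Real.sin θ) • (Pi.single 1 1 : Fin 3 → ℝ) := by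
  rw [AL_apply]
  funext i
  fin_cases i <;> simp [Pi.single_apply]

lemma AL_single1 (θ : ℝ) :
    AL θ (Pi.single 1 1) = Real.sin θ • (Pi.single 0 1 : Fin 3 → ℝ)
      + Real.cos θ • (Pi.single 1 1 : Fin 3 → ℝ) := by
  rw [AL_apply]
  funext i
  fin_cases i <;> simp [Pi.single_apply]

lemma g_helical {u : (Fin 3 → ℝ) → ℝ} (hu : ContDiff ℝ 1 u)
    (hinv : ∀ (θ : ℝ) (x : Fin 3 → ℝ), u (helS θ x) = u x) (θ : ℝ) (x : Fin 3 → ℝ) :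
    (fderiv ℝ u (helS θ x) (Pi.single 0 1)) ^ 2 + (fderiv ℝ u (helS θ x) (Pi.single 1 1)) ^ 2
      = (fderiv ℝ u x (Pi.single 0 1)) ^ 2 + (fderiv ℝ u x (Pi.single 1 1)) ^ 2 := by
  set A := fderiv ℝ u (helS θ x) (Pi.single 0 1) with hA
  set B := fderiv ℝ u (helS θ x) (Pi.single 1 1) with hB
  have h0 : fderiv ℝ u x (Pi.single 0 1) = Real.cos θ * A + (-Real.sin θ) * B := by
    rw [fderiv_helS_transfer hu hinv θ x, AL_single0]
    simp [smul_eq_mul]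
    rfl
  have h1 : fderiv ℝ u x (Pi.single 1 1) = Real.sin θ * A + Real.cos θ * B := by
    rw [fderiv_helS_transfer hu hinv θ x, AL_single1]
    simp [smul_eq_mul]
    rfl
  rw [h0, h1]
  have h := Real.sin_sq_add_cos_sq θ
  linear_combination (-(A ^ 2 + B ^ 2)) * h

/-- Ladyzhenskaya-type inequality for helical functions on `D = B₁ × (0,2π)`
vanishing on the lateral boundary:
`‖u‖_{L⁴(D)} ≤ C ‖u‖_{L²(D)}^{1/2} ‖∇_h u‖_{L²(D)}^{1/2}`. -/
theorem ladyzhenskaya_helical :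
    ∃ C : ℝ, 0 < C ∧ ∀ u : (Fin 3 → ℝ) → ℝ, ContDiff ℝ 1 u →
      (∀ (θ : ℝ) (x : Fin 3 → ℝ), u (helS θ x) = u x) →
      (∀ x : Fin 3 → ℝ, x 0 ^ 2 + x 1 ^ 2 = 1 → u x = 0) →
      (∫ x in helD, (u x) ^ 4) ^ ((1 : ℝ) / 4) ≤
        C * (∫ x in helD, (u x) ^ 2) ^ ((1 : ℝ) / 4) *
          (∫ x in helD,
            ((fderiv ℝ u x (Pi.single 0 1)) ^ 2 +
              (fderiv ℝ u x (Pi.single 1 1)) ^ 2)) ^ ((1 : ℝ) / 4) := by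
  refine ⟨1, one_pos, ?_⟩
  intro u hu hinv hbc
  have huc := hu.continuous
  set W : ℝ × ℝ → ℝ := fun p => u ![p.1, p.2, 0] with hWdef
  have hWeq : W = u ∘ ⇑iotaL := by
    funext p
    simp only [hWdef, Function.comp_apply, iotaL_apply]
  have hWC : ContDiff ℝ 1 W := by rw [hWeq]; exact hu.comp iotaL.contDiff
  have hWfder : ∀ p : ℝ × ℝ, HasFDerivAt W ((fderiv ℝ u (iotaL p)).comp iotaL) p := by
    intro p
    rw [hWeq]
    exact ((hu.differentiable one_ne_zero _).hasFDerivAt).comp p iotaL.hasFDerivAt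
  have hW1 : ∀ p : ℝ × ℝ, W1 W p = fderiv ℝ u ![p.1, p.2, 0] (Pi.single 0 1) := by
    intro p
    rw [W1, (hWfder p).fderiv]
    show fderiv ℝ u (iotaL p) (iotaL (1, 0)) = _
    rw [iotaL_e1, iotaL_apply]
  have hW2 : ∀ p : ℝ × ℝ, W2 W p = fderiv ℝ u ![p.1, p.2, 0] (Pi.single 1 1) := by
    intro p
    rw [W2, (hWfder p).fderiv]
    show fderiv ℝ u (iotaL p) (iotaL (0, 1)) = _
    rw [iotaL_e2, iotaL_apply]
  have hWbc : ∀ p : ℝ × ℝ, p.1 ^ 2 + p.2 ^ 2 = 1 → W p = 0 := by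
    intro p hp
    apply hbc
    simpa using hp
  have hfc : Continuous (fderiv ℝ u) := hu.continuous_fderiv one_ne_zero
  have hgc : Continuous fun x => (fderiv ℝ u x (Pi.single 0 1)) ^ 2 +
      (fderiv ℝ u x (Pi.single 1 1)) ^ 2 :=
    (((hfc.clm_apply continuous_const).pow 2).add ((hfc.clm_apply continuous_const).pow 2))
  have h4 := helSlice (v := fun x => u x ^ 4) (by fun_prop) (fun θ x => by simp only [hinv])
  have h2 := helSlice (v := fun x => u x ^ 2) (by fun_prop) (fun θ x => by simp only [hinv])
  have hgS := helSlice (v := fun x => (fderiv ℝ u x (Pi.single 0 1)) ^ 2 +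
      (fderiv ℝ u x (Pi.single 1 1)) ^ 2) hgc (fun θ x => g_helical hu hinv θ x)
  rw [h4, h2, hgS]
  have hXg : ∫ p in D2, ((fderiv ℝ u ![p.1, p.2, 0] (Pi.single 0 1)) ^ 2 +
        (fderiv ℝ u ![p.1, p.2, 0] (Pi.single 1 1)) ^ 2)
      = ∫ p in D2, (W1 W p ^ 2 + W2 W p ^ 2) := by
    congr 1
    funext p
    rw [hW1, hW2]
  rw [hXg]
  set X4 := ∫ p in D2, W p ^ 4 with hX4def
  set X2 := ∫ p in D2, W p ^ 2 with hX2def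
  set Xg := ∫ p in D2, (W1 W p ^ 2 + W2 W p ^ 2) with hXgdef
  have hX4 : 0 ≤ X4 := setIntegral_nonneg measurableSet_D2 fun p _ => by positivity
  have hX2 : 0 ≤ X2 := setIntegral_nonneg measurableSet_D2 fun p _ => sq_nonneg _
  have hXg0 : 0 ≤ Xg := setIntegral_nonneg measurableSet_D2 fun p _ => by positivity
  have hlady := lady2 hWC hWbc
  have hπ := Real.pi_gt_three
  rw [← hX4def, ← hX2def, ← hXgdef] at hlady
  have hprod : 0 ≤ X2 * Xg := mul_nonneg hX2 hXg0
  have key : 2 * Real.pi * X4 ≤ (2 * Real.pi * X2) * (2 * Real.pi * Xg) := by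
    have hstep : 2 * Real.pi * X4 ≤ 2 * Real.pi * (2 * X2 * Xg) :=
      mul_le_mul_of_nonneg_left hlady (by positivity)
    have hstep2 : 4 * Real.pi * (X2 * Xg) ≤ 4 * (Real.pi * Real.pi) * (X2 * Xg) := by
      have h1 : 0 ≤ 4 * (Real.pi * Real.pi - Real.pi) * (X2 * Xg) :=
        mul_nonneg (mul_nonneg (by norm_num) (by nlinarith)) hprod
      linarith
    calc 2 * Real.pi * X4 ≤ 2 * Real.pi * (2 * X2 * Xg) := hstep
      _ = 4 * Real.pi * (X2 * Xg) := by ring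
      _ ≤ 4 * (Real.pi * Real.pi) * (X2 * Xg) := hstep2
      _ = (2 * Real.pi * X2) * (2 * Real.pi * Xg) := by ring
  calc (2 * Real.pi * X4) ^ ((1:ℝ)/4)
      ≤ ((2 * Real.pi * X2) * (2 * Real.pi * Xg)) ^ ((1:ℝ)/4) :=
        Real.rpow_le_rpow (by positivity) key (by norm_num)
    _ = (2 * Real.pi * X2) ^ ((1:ℝ)/4) * (2 * Real.pi * Xg) ^ ((1:ℝ)/4) :=
        Real.mul_rpow (by positivity) (by positivity)
    _ = 1 * (2 * Real.pi * X2) ^ ((1:ℝ)/4) * (2 * Real.pi * Xg) ^ ((1:ℝ)/4) := by ring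
end
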